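/- Nonempty annuli imply annuli have comparable measure: Let $(\mathcal{X}, d, \mu)$ be a space of homogeneous type (doubling measure with doubling order $D$). Assume there exists $\varepsilon \in (0,1)$ such that for every ball $B$, $(2-\varepsilon)B \setminus B \ne \emptyset$. Then there exist constants $0 < c \le C$ independent of $B$ such that $c\,\mu(2B) \le \mu(2B \setminus B) \le \mu(2B)$ for every ball $B$. -/

import Mathlib

open MeasureTheory Metric ENNReal

lemma stmt15_iter {X : Type*} [MetricSpace X] [MeasurableSpace X] [BorelSpace X]
    (μ : Measure X) (C0 : ℝ≥0∞)
    (hdoub : ∀ (x : X) (r : ℝ), 0 < r → μ (ball x (2 * r)) ≤ C0 * μ (ball x r)) :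
    ∀ (k : ℕ) (y : X) (s : ℝ), 0 < s → μ (ball y (2 ^ k * s)) ≤ C0 ^ k * μ (ball y s) := by
  intro k
  induction k with
  | zero => intro y s hs; simp
  | succ k ih =>
    intro y s hs
    have h2 : (2 : ℝ) ^ (k + 1) * s = 2 * (2 ^ k * s) := by ring
    rw [h2]
    calc μ (ball y (2 * (2 ^ k * s))) ≤ C0 * μ (ball y (2 ^ k * s)) :=
          hdoub y _ (by positivity)
      _ ≤ C0 * (C0 ^ k * μ (ball y s)) := by
          exact mul_le_mul_right (ih y s hs) C0
      _ = C0 ^ (k + 1) * μ (ball y s) := by ring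

/-- In a space of homogeneous type in which all annuli `(2-ε)B \ B` are nonempty, the annulus
`2B \ B` has measure comparable to that of `2B`, uniformly in the ball `B`. -/
theorem stmt15 {X : Type*} [MetricSpace X] [MeasurableSpace X] [BorelSpace X]
    (μ : Measure X) (C0 : ℝ≥0∞) (hC0 : C0 ≠ ∞)
    (hdoub : ∀ (x : X) (r : ℝ), 0 < r → μ (ball x (2 * r)) ≤ C0 * μ (ball x r))
    (hfin : ∀ (x : X) (r : ℝ), 0 < r → μ (ball x r) < ∞)
    (ε : ℝ) (hε0 : 0 < ε) (hε1 : ε < 1)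
    (hann : ∀ (x : X) (r : ℝ), 0 < r → (ball x ((2 - ε) * r) \ ball x r).Nonempty) :
    ∃ c : ℝ, 0 < c ∧ ∀ (x : X) (r : ℝ), 0 < r →
      ENNReal.ofReal c * μ (ball x (2 * r)) ≤ μ (ball x (2 * r) \ ball x r) ∧
      μ (ball x (2 * r) \ ball x r) ≤ μ (ball x (2 * r)) := by
  -- set up constants
  set C1 : ℝ≥0∞ := C0 ⊔ 1 with hC1def
  have hC1top : C1 ≠ ∞ := by simp [hC1def, hC0]
  have hC1zero : C1 ≠ 0 := by simp [hC1def]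
  have hdoub' : ∀ (x : X) (r : ℝ), 0 < r → μ (ball x (2 * r)) ≤ C1 * μ (ball x r) := by
    intro x r hr
    exact (hdoub x r hr).trans (mul_le_mul_left le_sup_left _)
  -- geometric constants
  set cc : ℝ := 3 / (3 - ε) with hccdef
  have h3ε : (0:ℝ) < 3 - ε := by linarith
  have hcc1 : 1 < cc := by
    rw [hccdef, lt_div_iff₀ h3ε]; linarith
  have hcc32 : cc < 3 / 2 := by
    rw [hccdef, div_lt_div_iff₀ h3ε (by norm_num)]; linarith
  -- choose k with 2^k ≥ 15/ε
  obtain ⟨k, hk⟩ := pow_unbounded_of_one_lt (15 / ε) (by norm_num : (1:ℝ) < 2)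
  refine ⟨(C1⁻¹ ^ k).toReal, ?_, ?_⟩
  · apply ENNReal.toReal_pos
    · exact pow_ne_zero _ (ENNReal.inv_ne_zero.mpr hC1top)
    · exact ENNReal.pow_ne_top (ENNReal.inv_ne_top.mpr hC1zero)
  intro x r hr
  refine ⟨?_, measure_mono Set.diff_subset⟩
  -- find point in annulus for radius cc*r
  obtain ⟨y, hy1, hy2⟩ := hann x (cc * r) (by positivity)
  rw [mem_ball, dist_comm] at hy1
  rw [mem_ball, dist_comm, not_lt] at hy2
  set s : ℝ := (cc - 1) * r with hsdef
  have hs : 0 < s := by apply _root_.mul_pos; linarith; exact hr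
  -- key relation: (2-ε)*cc + (cc-1) = 2  (since cc = 3/(3-ε))
  have hkey : (2 - ε) * cc + (cc - 1) = 2 := by
    rw [hccdef]; field_simp; ring
  -- the small ball sits in the annulus
  have hsub1 : ball y s ⊆ ball x (2 * r) \ ball x r := by
    intro z hz
    rw [mem_ball] at hz
    constructor
    · rw [mem_ball]
      have := dist_triangle z y x
      rw [dist_comm y x] at this
      have : dist z x < s + (2 - ε) * (cc * r) := by
        calc dist z x ≤ dist z y + dist x y := by rw [dist_comm x y]; exact dist_triangle z y x
          _ < s + (2 - ε) * (cc * r) := by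
              apply add_lt_add_of_lt_of_lt hz hy1
      calc dist z x < s + (2 - ε) * (cc * r) := this
        _ = 2 * r := by rw [hsdef]; nlinarith [hkey]
    · rw [mem_ball, not_lt]
      have h1 : dist x y ≤ dist x z + dist z y := dist_triangle x z y
      have h2 : dist z y < s := hz
      have : cc * r ≤ dist x y := hy2
      rw [dist_comm x z] at h1
      nlinarith
  -- the big ball sits in the blown-up small ball
  have hsub2 : ball x (2 * r) ⊆ ball y (2 ^ k * s) := by
    intro z hz
    rw [mem_ball] at hz ⊢
    have h1 : dist z y ≤ dist z x + dist x y := dist_triangle z x y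
    have h2 : dist x y < (2 - ε) * (cc * r) := hy1
    have hR : dist z y < 2 * r + (2 - ε) * (cc * r) := by linarith
    -- 2*r + (2-ε)*cc*r ≤ (15/ε) * s  since cc - 1 = ε/(3-ε) ≥ ε/3 and rhs ≤ 5r
    have hs' : s = ε / (3 - ε) * r := by
      rw [hsdef, hccdef]; field_simp; ring
    have hbound : 2 * r + (2 - ε) * (cc * r) ≤ (15 / ε) * s := by
      rw [hs', hccdef, ← sub_nonneg]
      have e : (15 / ε * (ε / (3 - ε) * r) - (2 * r + (2 - ε) * (3 / (3 - ε) * r))) * (3 - ε)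
          = 15 * r - (2 * r * (3 - ε) + (2 - ε) * 3 * r) := by
        field_simp
      nlinarith [e, h3ε, hr, hε0, mul_pos h3ε hr]
    have hlast : (15 / ε) * s ≤ 2 ^ k * s := by
      apply mul_le_mul_of_nonneg_right (le_of_lt hk) hs.le
    linarith
  -- combine
  have hchain : μ (ball x (2 * r)) ≤ C1 ^ k * μ (ball x (2 * r) \ ball x r) := by
    calc μ (ball x (2 * r)) ≤ μ (ball y (2 ^ k * s)) := measure_mono hsub2
      _ ≤ C1 ^ k * μ (ball y s) := stmt15_iter μ C1 hdoub' k y s hs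
      _ ≤ C1 ^ k * μ (ball x (2 * r) \ ball x r) :=
          mul_le_mul_right (measure_mono hsub1) _
  have hinv : ENNReal.ofReal (C1⁻¹ ^ k).toReal = C1⁻¹ ^ k := by
    apply ENNReal.ofReal_toReal
    exact ENNReal.pow_ne_top (ENNReal.inv_ne_top.mpr hC1zero)
  rw [hinv]
  calc C1⁻¹ ^ k * μ (ball x (2 * r))
      ≤ C1⁻¹ ^ k * (C1 ^ k * μ (ball x (2 * r) \ ball x r)) :=
        mul_le_mul_right hchain _
    _ = (C1⁻¹ * C1) ^ k * μ (ball x (2 * r) \ ball x r) := by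
        rw [mul_pow, mul_assoc]
    _ = μ (ball x (2 * r) \ ball x r) := by
        rw [ENNReal.inv_mul_cancel hC1zero hC1top, one_pow, one_mul]
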